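/- For every n ≥ 1 and every 2D RLSLP G generating the identity matrix I_n, it holds that n < 2^{|G|}; hence g_rl(I_n) ≥ log₂ n, and so, combined with b(I_n) = O(1), there is an infinite family of square 2D strings of size N with g_rl = Ω(b·log N). -/

import Mathlib

/-!
Statement 7: For every `n ≥ 1` and every 2D RLSLP `G` generating the identity
matrix `I_n`, it holds that `n < 2^{|G|}`; hence `g_rl(I_n) ≥ log₂ n`.
(Together with `b(I_n) = O(1)` this gives a family with `g_rl = Ω(b·log N)`.)
-/

/-- A rule of a 2D RLSLP: terminal, horizontal/vertical concatenation,
or horizontal/vertical run-length rule. -/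
inductive RuleRL (α : Type*) (V : ℕ) : Type _ where
  | term : α → RuleRL α V
  | horiz : Fin V → Fin V → RuleRL α V
  | vert : Fin V → Fin V → RuleRL α V
  | hrep : ℕ → Fin V → RuleRL α V
  | vrep : ℕ → Fin V → RuleRL α V

/-- Variables referenced by a rule. -/
def RuleRL.refs {α : Type*} {V : ℕ} : RuleRL α V → List (Fin V)
  | .term _ => []
  | .horiz B C => [B, C]
  | .vert B C => [B, C]
  | .hrep _ B => [B]
  | .vrep _ B => [B]

/-- Size of a rule: terminal rules count 1, all other rules count 2. -/
def RuleRL.size {α : Type*} {V : ℕ} : RuleRL α V → ℕ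
  | .term _ => 1
  | _ => 2

/-- Consistency of the recorded expansions with a rule. -/
def ConsistentRLAt {α : Type*} {V : ℕ} (rows cols : Fin V → ℕ)
    (ent : Fin V → ℕ → ℕ → α) (A : Fin V) : RuleRL α V → Prop
  | .term a => rows A = 1 ∧ cols A = 1 ∧ ent A 0 0 = a
  | .horiz B C => rows A = rows B ∧ rows A = rows C ∧ cols A = cols B + cols C ∧
      (∀ i j, i < rows B → j < cols B → ent A i j = ent B i j) ∧
      (∀ i j, i < rows C → j < cols C → ent A i (cols B + j) = ent C i j)
  | .vert B C => cols A = cols B ∧ cols A = cols C ∧ rows A = rows B + rows C ∧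
      (∀ i j, i < rows B → j < cols B → ent A i j = ent B i j) ∧
      (∀ i j, i < rows C → j < cols C → ent A (rows B + i) j = ent C i j)
  | .hrep k B => 2 ≤ k ∧ rows A = rows B ∧ cols A = k * cols B ∧
      (∀ q i j, q < k → i < rows B → j < cols B → ent A i (q * cols B + j) = ent B i j)
  | .vrep k B => 2 ≤ k ∧ cols A = cols B ∧ rows A = k * rows B ∧
      (∀ q i j, q < k → i < rows B → j < cols B → ent A (q * rows B + i) j = ent B i j)

/-- A 2D run-length straight-line program over the alphabet `α`. -/
structure RLSLP2D (α : Type*) where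
  V : ℕ
  rule : Fin V → RuleRL α V
  start : Fin V
  rows : Fin V → ℕ
  cols : Fin V → ℕ
  ent : Fin V → ℕ → ℕ → α
  acyclic : ∀ A : Fin V, ∀ B ∈ (rule A).refs, B < A
  consistent : ∀ A : Fin V, ConsistentRLAt rows cols ent A (rule A)

/-- The size of a 2D RLSLP: the sum of the sizes of its rules. -/
def RLSLP2D.size {α : Type*} (G : RLSLP2D α) : ℕ := ∑ A : Fin G.V, (G.rule A).size

/-- `G` generates the `m × n` 2D string `M` (0-based entries). -/
def RLSLP2D.Generates {α : Type*} (G : RLSLP2D α) (m n : ℕ) (M : ℕ → ℕ → α) : Prop :=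
  G.rows G.start = m ∧ G.cols G.start = n ∧
  ∀ i j, i < m → j < n → G.ent G.start i j = M i j

/-- `g_rl(M)`: the minimum size of a 2D RLSLP generating `M`. -/
noncomputable def grlMeasure {α : Type*} (M : ℕ → ℕ → α) (m n : ℕ) : ℕ :=
  sInf {s | ∃ G : RLSLP2D α, G.Generates m n M ∧ G.size = s}

/-- The identity matrix (over `{0,1}`, with `true` as `1`), 0-based. -/
def idMat : ℕ → ℕ → Bool := fun i j => decide (i = j)

def Sg {α : Type*} (G : RLSLP2D α) (A : Fin G.V) : ℕ :=
  ∑ B ∈ Finset.Iic A, (G.rule B).size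

lemma ruleSize_pos {α : Type*} {V : ℕ} (r : RuleRL α V) : 1 ≤ r.size := by
  cases r <;> simp [RuleRL.size]

lemma Sg_pos {α : Type*} (G : RLSLP2D α) (A : Fin G.V) : 1 ≤ Sg G A :=
  le_trans (ruleSize_pos _)
    (Finset.single_le_sum (f := fun B => (G.rule B).size) (fun _ _ => Nat.zero_le _)
      (Finset.mem_Iic.2 le_rfl))

lemma Sg_le_size {α : Type*} (G : RLSLP2D α) (A : Fin G.V) : Sg G A ≤ G.size :=
  Finset.sum_le_sum_of_subset (Finset.subset_univ _)

lemma Sg_step {α : Type*} (G : RLSLP2D α) {A B : Fin G.V} (h : B < A)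
    (h2 : (G.rule A).size = 2) : Sg G B + 2 ≤ Sg G A := by
  have hins : Finset.Iic A = insert A (Finset.Iio A) := (Finset.Iio_insert A).symm
  have hsub : Finset.Iic B ⊆ Finset.Iio A := fun x hx =>
    Finset.mem_Iio.2 (lt_of_le_of_lt (Finset.mem_Iic.1 hx) h)
  have hle : Sg G B ≤ ∑ x ∈ Finset.Iio A, (G.rule x).size :=
    Finset.sum_le_sum_of_subset hsub
  have hA : Sg G A = (G.rule A).size + ∑ x ∈ Finset.Iio A, (G.rule x).size := by
    unfold Sg
    rw [hins, Finset.sum_insert (by simp)]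
  omega

lemma two_pow_halves {s : ℕ} (hs : 1 ≤ s) : 2^(s-1) + 2^(s-1) = 2^s := by
  have h : s - 1 + 1 = s := by omega
  calc 2^(s-1) + 2^(s-1) = 2^(s-1) * 2 := by ring
  _ = 2^(s-1+1) := (pow_succ 2 (s-1)).symm
  _ = 2^s := by rw [h]

lemma diag_bound_aux (G : RLSLP2D Bool) : ∀ (N : ℕ) (A : Fin G.V), A.val < N → ∀ r c : ℕ,
    (∀ i j, i < G.rows A → j < G.cols A → G.ent A i j = idMat (r+i) (c+j)) →
    min (r + G.rows A) (c + G.cols A) - max r c < 2 ^ (Sg G A) := by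
  intro N
  induction N with
  | zero => intro A h; omega
  | succ N IH =>
    intro A hA r c hocc
    rcases hr : G.rule A with a | ⟨B, C⟩ | ⟨B, C⟩ | ⟨k, B⟩ | ⟨k, B⟩ <;>
      (have hcon := G.consistent A; rw [hr] at hcon)
    · -- term
      obtain ⟨h1, h2, _⟩ := hcon
      have hp : (2:ℕ) ≤ 2 ^ Sg G A := by
        calc (2:ℕ) = 2^1 := rfl
        _ ≤ 2 ^ Sg G A := Nat.pow_le_pow_right (by norm_num) (Sg_pos G A)
      omega
    · -- horiz
      obtain ⟨hrB, hrC, hcBC, hEB, hEC⟩ := hcon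
      have hBlt : B < A := G.acyclic A B (by rw [hr]; simp [RuleRL.refs])
      have hClt : C < A := G.acyclic A C (by rw [hr]; simp [RuleRL.refs])
      have hIB := IH B (by omega) r c (fun i j hi hj => by
        rw [← hEB i j hi hj]; exact hocc i j (by omega) (by omega))
      have hIC := IH C (by omega) r (c + G.cols B) (fun i j hi hj => by
        rw [← hEC i j hi hj]
        have e : c + (G.cols B + j) = c + G.cols B + j := by omega
        rw [← e]; exact hocc i (G.cols B + j) (by omega) (by omega))
      have p1 : 2 ^ Sg G B ≤ 2 ^ (Sg G A - 1) := Nat.pow_le_pow_right (by norm_num)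
        (by have := Sg_step G hBlt (by rw [hr]; rfl); omega)
      have p2 : 2 ^ Sg G C ≤ 2 ^ (Sg G A - 1) := Nat.pow_le_pow_right (by norm_num)
        (by have := Sg_step G hClt (by rw [hr]; rfl); omega)
      have e := two_pow_halves (Sg_pos G A)
      omega
    · -- vert
      obtain ⟨hcB, hcC, hrBC, hEB, hEC⟩ := hcon
      have hBlt : B < A := G.acyclic A B (by rw [hr]; simp [RuleRL.refs])
      have hClt : C < A := G.acyclic A C (by rw [hr]; simp [RuleRL.refs])
      have hIB := IH B (by omega) r c (fun i j hi hj => by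
        rw [← hEB i j hi hj]; exact hocc i j (by omega) (by omega))
      have hIC := IH C (by omega) (r + G.rows B) c (fun i j hi hj => by
        rw [← hEC i j hi hj]
        have e : r + (G.rows B + i) = r + G.rows B + i := by omega
        rw [← e]; exact hocc (G.rows B + i) j (by omega) (by omega))
      have p1 : 2 ^ Sg G B ≤ 2 ^ (Sg G A - 1) := Nat.pow_le_pow_right (by norm_num)
        (by have := Sg_step G hBlt (by rw [hr]; rfl); omega)
      have p2 : 2 ^ Sg G C ≤ 2 ^ (Sg G A - 1) := Nat.pow_le_pow_right (by norm_num)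
        (by have := Sg_step G hClt (by rw [hr]; rfl); omega)
      have e := two_pow_halves (Sg_pos G A)
      omega
    · -- hrep
      obtain ⟨hk, hrB, hcB, hE⟩ := hcon
      have hpow : (0:ℕ) < 2 ^ Sg G A := by positivity
      by_cases hc0 : G.cols B = 0
      · have : G.cols A = 0 := by rw [hcB, hc0, Nat.mul_zero]
        omega
      by_cases hr0 : G.rows B = 0
      · have : G.rows A = 0 := by omega
        omega
      have hcBpos : 0 < G.cols B := Nat.pos_of_ne_zero hc0
      have hcAk : 2 * G.cols B ≤ G.cols A := by
        rw [hcB]; exact Nat.mul_le_mul_right _ hk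
      have hfalse : ∀ i j, i < G.rows A → j < G.cols A → G.ent A i j = false := by
        intro i j hi hj
        have hiB : i < G.rows B := by omega
        have hjm : j % G.cols B < G.cols B := Nat.mod_lt _ hcBpos
        have hj' : j < k * G.cols B := by rw [← hcB]; exact hj
        have hq : j / G.cols B < k := by
          rw [Nat.div_lt_iff_lt_mul hcBpos]; omega
        have ej : j / G.cols B * G.cols B + j % G.cols B = j := by
          rw [mul_comm]; exact Nat.div_add_mod j (G.cols B)
        have e1 := hE (j / G.cols B) i (j % G.cols B) hq hiB hjm
        rw [ej] at e1
        have e2 := hE 0 i (j % G.cols B) (by omega) hiB hjm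
        have e3 := hE 1 i (j % G.cols B) (by omega) hiB hjm
        have o2 := hocc i (0 * G.cols B + j % G.cols B) hi (by omega)
        have o3 := hocc i (1 * G.cols B + j % G.cols B) hi (by omega)
        rw [e2] at o2
        rw [e3] at o3
        by_contra hne
        have hAt : G.ent B i (j % G.cols B) = true := by
          rw [← e1]; cases h : G.ent A i j
          · exact absurd h hne
          · rfl
        rw [hAt] at o2 o3
        have t2 : r + i = c + (0 * G.cols B + j % G.cols B) := by
          simpa [idMat] using o2.symm
        have t3 : r + i = c + (1 * G.cols B + j % G.cols B) := by
          simpa [idMat] using o3.symm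
        omega
      by_cases hD : min (r + G.rows A) (c + G.cols A) - max r c = 0
      · omega
      exfalso
      have h1 : max r c < min (r + G.rows A) (c + G.cols A) := by omega
      have hi : max r c - r < G.rows A := by omega
      have hj : max r c - c < G.cols A := by omega
      have ho := hocc _ _ hi hj
      have hf := hfalse _ _ hi hj
      rw [hf] at ho
      have e1 : r + (max r c - r) = max r c := by omega
      have e2 : c + (max r c - c) = max r c := by omega
      rw [e1, e2] at ho
      simp [idMat] at ho
    · -- vrep
      obtain ⟨hk, hcB, hrB, hE⟩ := hcon
      have hpow : (0:ℕ) < 2 ^ Sg G A := by positivity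
      by_cases hr0 : G.rows B = 0
      · have : G.rows A = 0 := by rw [hrB, hr0, Nat.mul_zero]
        omega
      by_cases hc0 : G.cols B = 0
      · have : G.cols A = 0 := by omega
        omega
      have hrBpos : 0 < G.rows B := Nat.pos_of_ne_zero hr0
      have hrAk : 2 * G.rows B ≤ G.rows A := by
        rw [hrB]; exact Nat.mul_le_mul_right _ hk
      have hfalse : ∀ i j, i < G.rows A → j < G.cols A → G.ent A i j = false := by
        intro i j hi hj
        have hjB : j < G.cols B := by omega
        have him : i % G.rows B < G.rows B := Nat.mod_lt _ hrBpos
        have hi' : i < k * G.rows B := by rw [← hrB]; exact hi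
        have hq : i / G.rows B < k := by
          rw [Nat.div_lt_iff_lt_mul hrBpos]; omega
        have ei : i / G.rows B * G.rows B + i % G.rows B = i := by
          rw [mul_comm]; exact Nat.div_add_mod i (G.rows B)
        have e1 := hE (i / G.rows B) (i % G.rows B) j hq him hjB
        rw [ei] at e1
        have e2 := hE 0 (i % G.rows B) j (by omega) him hjB
        have e3 := hE 1 (i % G.rows B) j (by omega) him hjB
        have o2 := hocc (0 * G.rows B + i % G.rows B) j (by omega) hj
        have o3 := hocc (1 * G.rows B + i % G.rows B) j (by omega) hj
        rw [e2] at o2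
        rw [e3] at o3
        by_contra hne
        have hAt : G.ent B (i % G.rows B) j = true := by
          rw [← e1]; cases h : G.ent A i j
          · exact absurd h hne
          · rfl
        rw [hAt] at o2 o3
        have t2 : r + (0 * G.rows B + i % G.rows B) = c + j := by
          simpa [idMat] using o2.symm
        have t3 : r + (1 * G.rows B + i % G.rows B) = c + j := by
          simpa [idMat] using o3.symm
        omega
      by_cases hD : min (r + G.rows A) (c + G.cols A) - max r c = 0
      · omega
      exfalso
      have h1 : max r c < min (r + G.rows A) (c + G.cols A) := by omega
      have hi : max r c - r < G.rows A := by omega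
      have hj : max r c - c < G.cols A := by omega
      have ho := hocc _ _ hi hj
      have hf := hfalse _ _ hi hj
      rw [hf] at ho
      have e1 : r + (max r c - r) = max r c := by omega
      have e2 : c + (max r c - c) = max r c := by omega
      rw [e1, e2] at ho
      simp [idMat] at ho

lemma main_bound {n : ℕ} (hn : 1 ≤ n) (G : RLSLP2D Bool) (hg : G.Generates n n idMat) :
    n < 2 ^ G.size := by
  obtain ⟨h1, h2, h3⟩ := hg
  have key := diag_bound_aux G (G.V) G.start G.start.isLt 0 0 (by
    intro i j hi hj
    simp only [Nat.zero_add]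
    exact h3 i j (by omega) (by omega))
  rw [h1, h2] at key
  have hle : 2 ^ Sg G G.start ≤ 2 ^ G.size :=
    Nat.pow_le_pow_right (by norm_num) (Sg_le_size G G.start)
  omega


lemma md {n : ℕ} (q r : ℕ) (hr : r < n) : (n*q + r) % n = r ∧ (n*q + r) / n = q := by
  constructor
  · rw [Nat.mul_add_mod]
    exact Nat.mod_eq_of_lt hr
  · rw [Nat.mul_add_div (by omega), Nat.div_eq_of_lt hr, Nat.add_zero]

def idRule (n : ℕ) (k : Fin (n*n+n+1)) : RuleRL Bool (n*n+n+1) :=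
  if h0 : k.val = 0 then .term false
  else if h1 : k.val = 1 then .term true
  else if hk : k.val < 2 + n*n then
    if hb : (k.val - 2) % n = 0 then .term (idMat ((k.val - 2)/n) 0)
    else .horiz ⟨k.val - 1, by have := k.isLt; omega⟩
      ⟨if (k.val-2)/n = (k.val-2)%n then 1 else 0, by
        have := k.isLt
        have hn : 1 ≤ n := by
          rcases Nat.eq_zero_or_pos n with h | h
          · subst h; omega
          · exact h
        split <;> omega⟩
  else
    if hc : k.val = 2 + n*n then
      .vert ⟨2 + (n-1), by
          have hilt := k.isLt
          have e1 : n ≤ n*n := Nat.le_mul_of_pos_left n (by omega)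
          omega⟩
        ⟨2 + n + (n-1), by
          have hilt := k.isLt
          have hn2 : 2 ≤ n := by omega
          have e2 : 2*n ≤ n*n := Nat.mul_le_mul_right n hn2
          omega⟩
    else
      .vert ⟨k.val - 1, by have := k.isLt; omega⟩
        ⟨2 + ((k.val - (2+n*n)) + 1)*n + (n-1), by
          have hilt := k.isLt
          have hcle : (k.val - (2+n*n)) + 1 + 1 ≤ n := by omega
          have h2 := Nat.mul_le_mul_right n hcle
          have h3 : ((k.val - (2+n*n)) + 1 + 1) * n
              = ((k.val - (2+n*n)) + 1) * n + n := by ring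
          rw [h3] at h2
          omega⟩

def idRows (n : ℕ) (k : Fin (n*n+n+1)) : ℕ :=
  if k.val < 2 + n*n then 1 else k.val - (2+n*n) + 2

def idCols (n : ℕ) (k : Fin (n*n+n+1)) : ℕ :=
  if k.val < 2 then 1 else if k.val < 2 + n*n then (k.val-2) % n + 1 else n

def idEnt (n : ℕ) (k : Fin (n*n+n+1)) : ℕ → ℕ → Bool :=
  if k.val = 0 then fun _ _ => false
  else if k.val = 1 then fun _ _ => true
  else if k.val < 2 + n*n then fun _ j => idMat ((k.val-2)/n) j
  else fun i j => idMat i j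

lemma idRows_small {n : ℕ} {k : Fin (n*n+n+1)} (h : k.val < 2+n*n) : idRows n k = 1 :=
  if_pos h
lemma idRows_big {n : ℕ} {k : Fin (n*n+n+1)} (h : ¬ k.val < 2+n*n) :
    idRows n k = k.val - (2+n*n) + 2 := if_neg h
lemma idCols_term {n : ℕ} {k : Fin (n*n+n+1)} (h : k.val < 2) : idCols n k = 1 :=
  if_pos h
lemma idCols_rp {n : ℕ} {k : Fin (n*n+n+1)} (h2 : 2 ≤ k.val) (h : k.val < 2+n*n) :
    idCols n k = (k.val-2) % n + 1 := by
  rw [idCols, if_neg (by omega), if_pos h]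
lemma idCols_cp {n : ℕ} {k : Fin (n*n+n+1)} (h : ¬ k.val < 2+n*n) : idCols n k = n := by
  rw [idCols, if_neg (by omega), if_neg h]
lemma idEnt_0 {n : ℕ} {k : Fin (n*n+n+1)} (h : k.val = 0) : idEnt n k = fun _ _ => false := by
  rw [idEnt, if_pos h]
lemma idEnt_1 {n : ℕ} {k : Fin (n*n+n+1)} (h : k.val = 1) : idEnt n k = fun _ _ => true := by
  rw [idEnt, if_neg (by omega), if_pos h]
lemma idEnt_rp {n : ℕ} {k : Fin (n*n+n+1)} (h2 : 2 ≤ k.val) (h : k.val < 2+n*n) :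
    idEnt n k = fun _ j => idMat ((k.val-2)/n) j := by
  rw [idEnt, if_neg (by omega), if_neg (by omega), if_pos h]
lemma idEnt_cp {n : ℕ} {k : Fin (n*n+n+1)} (h : ¬ k.val < 2+n*n) :
    idEnt n k = fun i j => idMat i j := by
  rw [idEnt, if_neg (by omega), if_neg (by omega), if_neg h]

lemma nge1 {n m : ℕ} (h2 : 2 ≤ m) (h : m < 2 + n*n) : 1 ≤ n := by
  rcases Nat.eq_zero_or_pos n with h' | h'
  · subst h'; omega
  · exact h'

lemma idAcyclic (n : ℕ) : ∀ A : Fin (n*n+n+1), ∀ B ∈ (idRule n A).refs, B < A := by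
  intro A B hB
  have hA := A.isLt
  rw [idRule] at hB
  split at hB
  · simp [RuleRL.refs] at hB
  split at hB
  · simp [RuleRL.refs] at hB
  split at hB
  · rename_i h0 h1 hk
    split at hB
    · simp [RuleRL.refs] at hB
    · simp only [RuleRL.refs, List.mem_cons, List.not_mem_nil, or_false] at hB
      have hn : 1 ≤ n := nge1 (by omega) hk
      rcases hB with h | h
      · simp only [h, Fin.lt_def]; omega
      · simp only [h, Fin.lt_def]
        split <;> omega
  · rename_i h0 h1 hk
    have hn2 : 2 ≤ n := by omega
    have e1 : n ≤ n*n := Nat.le_mul_of_pos_left n (by omega)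
    have e2 : 2*n ≤ n*n := Nat.mul_le_mul_right n hn2
    split at hB
    · rename_i hc
      simp only [RuleRL.refs, List.mem_cons, List.not_mem_nil, or_false] at hB
      rcases hB with h | h <;> (simp only [h, Fin.lt_def]; omega)
    · rename_i hc
      simp only [RuleRL.refs, List.mem_cons, List.not_mem_nil, or_false] at hB
      rcases hB with h | h
      · simp only [h, Fin.lt_def]; omega
      · simp only [h, Fin.lt_def]
        have hcle : (A.val - (2+n*n)) + 1 + 1 ≤ n := by omega
        have h2 := Nat.mul_le_mul_right n hcle
        have h3 : ((A.val - (2+n*n)) + 1 + 1) * n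
            = ((A.val - (2+n*n)) + 1) * n + n := by ring
        rw [h3] at h2
        omega

lemma idConsistent (n : ℕ) :
    ∀ A : Fin (n*n+n+1), ConsistentRLAt (idRows n) (idCols n) (idEnt n) A (idRule n A) := by
  intro A
  have hA := A.isLt
  rw [idRule]
  split
  · rename_i h0
    exact ⟨idRows_small (by omega), idCols_term (by omega), by rw [idEnt_0 h0]⟩
  split
  · rename_i h0 h1
    exact ⟨idRows_small (by omega), idCols_term (by omega), by rw [idEnt_1 h1]⟩
  split
  · -- row-prefix range
    rename_i h0 h1 hk
    have hn : 1 ≤ n := nge1 (by omega) hk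
    split
    · -- b = 0 : terminal
      rename_i hb
      refine ⟨idRows_small hk, ?_, ?_⟩
      · rw [idCols_rp (by omega) hk, hb]
      · rw [idEnt_rp (by omega) hk]
    · -- b ≥ 1 : horiz
      rename_i hb
      have hmod : (A.val - 2) % n < n := Nat.mod_lt _ (by omega)
      have hd : n * ((A.val - 2)/n) + (A.val - 2) % n = A.val - 2 :=
        Nat.div_add_mod (A.val - 2) n
      have hA3 : 3 ≤ A.val := by
        by_contra h
        have h2 : A.val - 2 = 0 := by omega
        apply hb
        rw [h2]
        exact Nat.zero_mod n
      have hprev : A.val - 1 - 2 = n * ((A.val - 2)/n) + ((A.val - 2) % n - 1) := by omega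
      have hmd := md (n := n) ((A.val - 2)/n) ((A.val - 2) % n - 1) (by omega)
      split
      case isTrue he =>
        refine ⟨?_, ?_, ?_, ?_, ?_⟩
        · rw [idRows_small hk, idRows_small (k := ⟨A.val - 1, _⟩) (by simp only [Fin.val_mk]; omega)]
        · rw [idRows_small hk, idRows_small (k := ⟨1, _⟩) (by simp only [Fin.val_mk]; omega)]
        · rw [idCols_rp (by omega) hk,
            idCols_rp (k := ⟨A.val - 1, _⟩) (by simp only [Fin.val_mk]; omega)
              (by simp only [Fin.val_mk]; omega),
            idCols_term (k := ⟨1, _⟩) (by simp only [Fin.val_mk]; omega)]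
          simp only [Fin.val_mk, hprev, hmd.1]
          omega
        · intro i j hi hj
          rw [idEnt_rp (by omega) hk,
            idEnt_rp (k := ⟨A.val - 1, _⟩) (by simp only [Fin.val_mk]; omega)
              (by simp only [Fin.val_mk]; omega)]
          simp only [Fin.val_mk, hprev, hmd.2]
        · intro i j hi hj
          rw [idCols_term (k := ⟨1, _⟩) (by simp only [Fin.val_mk]; omega)] at hj
          rw [idCols_rp (k := ⟨A.val - 1, _⟩) (by simp only [Fin.val_mk]; omega)
              (by simp only [Fin.val_mk]; omega),
            idEnt_rp (by omega) hk, idEnt_1 (k := ⟨1, _⟩) (by simp only [Fin.val_mk])]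
          simp only [Fin.val_mk, hprev, hmd.1]
          have harg : (A.val - 2) % n - 1 + 1 + j = (A.val - 2) % n := by omega
          rw [harg]
          simp [idMat, he]
      case isFalse he =>
        refine ⟨?_, ?_, ?_, ?_, ?_⟩
        · rw [idRows_small hk, idRows_small (k := ⟨A.val - 1, _⟩) (by simp only [Fin.val_mk]; omega)]
        · rw [idRows_small hk, idRows_small (k := ⟨0, _⟩) (by simp only [Fin.val_mk]; omega)]
        · rw [idCols_rp (by omega) hk,
            idCols_rp (k := ⟨A.val - 1, _⟩) (by simp only [Fin.val_mk]; omega)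
              (by simp only [Fin.val_mk]; omega),
            idCols_term (k := ⟨0, _⟩) (by simp only [Fin.val_mk]; omega)]
          simp only [Fin.val_mk, hprev, hmd.1]
          omega
        · intro i j hi hj
          rw [idEnt_rp (by omega) hk,
            idEnt_rp (k := ⟨A.val - 1, _⟩) (by simp only [Fin.val_mk]; omega)
              (by simp only [Fin.val_mk]; omega)]
          simp only [Fin.val_mk, hprev, hmd.2]
        · intro i j hi hj
          rw [idCols_term (k := ⟨0, _⟩) (by simp only [Fin.val_mk]; omega)] at hj
          rw [idCols_rp (k := ⟨A.val - 1, _⟩) (by simp only [Fin.val_mk]; omega)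
              (by simp only [Fin.val_mk]; omega),
            idEnt_rp (by omega) hk, idEnt_0 (k := ⟨0, _⟩) (by simp only [Fin.val_mk])]
          simp only [Fin.val_mk, hprev, hmd.1]
          have harg : (A.val - 2) % n - 1 + 1 + j = (A.val - 2) % n := by omega
          rw [harg]
          simp only [idMat]
          exact decide_eq_false he
  · -- col-prefix range
    rename_i h0 h1 hk
    have hn2 : 2 ≤ n := by omega
    have e1 : n ≤ n*n := Nat.le_mul_of_pos_left n (by omega)
    have e2 : 2*n ≤ n*n := Nat.mul_le_mul_right n hn2
    split
    · -- first col-prefix : rows 0 and 1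
      rename_i hc
      have hB2 : 2 + (n-1) - 2 = n * 0 + (n-1) := by omega
      have hC2 : 2 + n + (n-1) - 2 = n * 1 + (n-1) := by omega
      have hmdB := md (n := n) 0 (n-1) (by omega)
      have hmdC := md (n := n) 1 (n-1) (by omega)
      refine ⟨?_, ?_, ?_, ?_, ?_⟩
      · rw [idCols_cp hk, idCols_rp (k := ⟨2 + (n-1), _⟩) (by simp only [Fin.val_mk]; omega)
          (by simp only [Fin.val_mk]; omega)]
        simp only [Fin.val_mk, hB2, hmdB.1]
        omega
      · rw [idCols_cp hk, idCols_rp (k := ⟨2 + n + (n-1), _⟩) (by simp only [Fin.val_mk]; omega)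
          (by simp only [Fin.val_mk]; omega)]
        simp only [Fin.val_mk, hC2, hmdC.1]
        omega
      · rw [idRows_big hk, idRows_small (k := ⟨2 + (n-1), _⟩) (by simp only [Fin.val_mk]; omega),
          idRows_small (k := ⟨2 + n + (n-1), _⟩) (by simp only [Fin.val_mk]; omega)]
        omega
      · intro i j hi hj
        rw [idRows_small (k := ⟨2 + (n-1), _⟩) (by simp only [Fin.val_mk]; omega)] at hi
        rw [idEnt_cp hk, idEnt_rp (k := ⟨2 + (n-1), _⟩) (by simp only [Fin.val_mk]; omega)
          (by simp only [Fin.val_mk]; omega)]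
        simp only [Fin.val_mk, hB2, hmdB.2]
        have hi0 : i = 0 := by omega
        subst hi0
        rfl
      · intro i j hi hj
        rw [idRows_small (k := ⟨2 + n + (n-1), _⟩) (by simp only [Fin.val_mk]; omega)] at hi
        rw [idRows_small (k := ⟨2 + (n-1), _⟩) (by simp only [Fin.val_mk]; omega)]
        rw [idEnt_cp hk, idEnt_rp (k := ⟨2 + n + (n-1), _⟩) (by simp only [Fin.val_mk]; omega)
          (by simp only [Fin.val_mk]; omega)]
        simp only [Fin.val_mk, hC2, hmdC.2]
        have hi0 : i = 0 := by omega
        subst hi0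
        rfl
    · -- later col-prefixes
      rename_i hc
      have hc1 : 1 ≤ A.val - (2+n*n) := by omega
      have hcle : (A.val - (2+n*n)) + 1 + 1 ≤ n := by omega
      have h2 := Nat.mul_le_mul_right n hcle
      have h3 : ((A.val - (2+n*n)) + 1 + 1) * n = ((A.val - (2+n*n)) + 1) * n + n := by ring
      rw [h3] at h2
      have hC2 : 2 + ((A.val - (2+n*n)) + 1)*n + (n-1) - 2
          = n * ((A.val - (2+n*n)) + 1) + (n-1) := by
        rw [mul_comm]; omega
      have hmdC := md (n := n) ((A.val - (2+n*n)) + 1) (n-1) (by omega)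
      refine ⟨?_, ?_, ?_, ?_, ?_⟩
      · rw [idCols_cp hk, idCols_cp (k := ⟨A.val - 1, _⟩) (by simp only [Fin.val_mk]; omega)]
      · rw [idCols_cp hk,
          idCols_rp (k := ⟨2 + ((A.val - (2+n*n)) + 1)*n + (n-1), _⟩)
            (by simp only [Fin.val_mk]; omega) (by simp only [Fin.val_mk]; omega)]
        simp only [Fin.val_mk, hC2, hmdC.1]
        omega
      · rw [idRows_big hk, idRows_big (k := ⟨A.val - 1, _⟩) (by simp only [Fin.val_mk]; omega),
          idRows_small (k := ⟨2 + ((A.val - (2+n*n)) + 1)*n + (n-1), _⟩)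
            (by simp only [Fin.val_mk]; omega)]
        simp only [Fin.val_mk]
        omega
      · intro i j hi hj
        rw [idEnt_cp hk, idEnt_cp (k := ⟨A.val - 1, _⟩) (by simp only [Fin.val_mk]; omega)]
      · intro i j hi hj
        rw [idRows_small (k := ⟨2 + ((A.val - (2+n*n)) + 1)*n + (n-1), _⟩)
            (by simp only [Fin.val_mk]; omega)] at hi
        rw [idRows_big (k := ⟨A.val - 1, _⟩) (by simp only [Fin.val_mk]; omega)]
        rw [idEnt_cp hk,
          idEnt_rp (k := ⟨2 + ((A.val - (2+n*n)) + 1)*n + (n-1), _⟩)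
            (by simp only [Fin.val_mk]; omega) (by simp only [Fin.val_mk]; omega)]
        simp only [Fin.val_mk, hC2, hmdC.2]
        have hi0 : i = 0 := by omega
        subst hi0
        have harg : A.val - 1 - (2 + n * n) + 2 + 0 = A.val - (2+n*n) + 1 := by omega
        rw [harg]

def idG (n : ℕ) : RLSLP2D Bool where
  V := n*n + n + 1
  rule := idRule n
  start := if h : n = 1 then ⟨2, by subst h; omega⟩ else ⟨n*n + n, by omega⟩
  rows := idRows n
  cols := idCols n
  ent := idEnt n
  acyclic := idAcyclic n
  consistent := idConsistent n

lemma idG_generates (n : ℕ) (hn : 1 ≤ n) : (idG n).Generates n n idMat := by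
  rw [RLSLP2D.Generates]
  by_cases h1 : n = 1
  · subst h1
    have hval : (((idG 1).start : Fin (1*1+1+1)) : ℕ) = 2 := rfl
    refine ⟨?_, ?_, ?_⟩
    · rw [show (idG 1).rows = idRows 1 from rfl]
      exact idRows_small (by rw [hval]; norm_num)
    · rw [show (idG 1).cols = idCols 1 from rfl,
        idCols_rp (k := (idG 1).start) (by rw [hval]) (by rw [hval]; norm_num), hval]
    · intro i j hi hj
      have hi0 : i = 0 := by omega
      have hj0 : j = 0 := by omega
      subst hi0; subst hj0
      rw [show (idG 1).ent = idEnt 1 from rfl,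
        idEnt_rp (k := (idG 1).start) (by rw [hval]) (by rw [hval]; norm_num), hval]
  · have hn2 : 2 ≤ n := by omega
    have e1 : n ≤ n*n := Nat.le_mul_of_pos_left n (by omega)
    have hs : (idG n).start = (⟨n*n + n, by show n*n+n < n*n+n+1; omega⟩ : Fin (n*n+n+1)) :=
      dif_neg h1
    have hval : (((idG n).start : Fin (n*n+n+1)) : ℕ) = n*n + n := congrArg Fin.val hs
    refine ⟨?_, ?_, ?_⟩
    · rw [show (idG n).rows = idRows n from rfl, idRows_big (k := (idG n).start) (by rw [hval]; omega), hval]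
      omega
    · rw [show (idG n).cols = idCols n from rfl, idCols_cp (k := (idG n).start) (by rw [hval]; omega)]
    · intro i j hi hj
      rw [show (idG n).ent = idEnt n from rfl, idEnt_cp (k := (idG n).start) (by rw [hval]; omega)]

theorem statement7 (n : ℕ) (hn : 1 ≤ n) :
    (∀ G : RLSLP2D Bool, G.Generates n n idMat →
      n < 2 ^ G.size ∧ Nat.log 2 n ≤ G.size) ∧
    Nat.log 2 n ≤ grlMeasure (α := Bool) idMat n n := by
  constructor
  · intro G hG
    have h := main_bound hn G hG
    refine ⟨h, ?_⟩
    have hlog := Nat.log_lt_of_lt_pow (by omega) h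
    omega
  · have hne : {s | ∃ G : RLSLP2D Bool, G.Generates n n idMat ∧ G.size = s}.Nonempty :=
      ⟨(idG n).size, idG n, idG_generates n hn, rfl⟩
    obtain ⟨G, hGen, hEq⟩ := Nat.sInf_mem hne
    rw [grlMeasure, ← hEq]
    have h := main_bound hn G hGen
    have hlog := Nat.log_lt_of_lt_pow (by omega) h
    omega
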